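/- A connected matching-covered graph (with at least one edge and a perfect matching) has no cut vertex; in particular it is 2-connected. -/

import Mathlib

/-! Multigraphs (parallel edges allowed, no loops) with half-edge 2-colourings,
    matchings, W-state graphs and W-cones, following the paper. -/

structure Multigraph (V E : Type) where
  fst : E → V
  snd : E → V
  no_loop : ∀ e, fst e ≠ snd e

namespace Multigraph

variable {V E : Type} (G : Multigraph V E)

/-- Edge `e` is incident with vertex `v`. -/
def Inc (e : E) (v : V) : Prop := G.fst e = v ∨ G.snd e = v

/-- Adjacency using only edges in the edge set `F`. -/
def AdjIn (F : Set E) (u v : V) : Prop :=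
  u ≠ v ∧ ∃ e ∈ F, G.Inc e u ∧ G.Inc e v

def Adj (u v : V) : Prop := G.AdjIn Set.univ u v

/-- Reachability inside the vertex set `S`, using only edges in `F`. -/
def ReachOn (F : Set E) (S : Set V) (u v : V) : Prop :=
  Relation.ReflTransGen (fun a b => a ∈ S ∧ b ∈ S ∧ G.AdjIn F a b) u v

/-- The subgraph with edge set `F` induced on the vertex set `S` is connected. -/
def ConnectedOn (F : Set E) (S : Set V) : Prop :=
  ∀ u ∈ S, ∀ v ∈ S, G.ReachOn F S u v

def Connected : Prop := G.ConnectedOn Set.univ Set.univ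

/-- `K` is a connected component of the subgraph with edge set `F` induced on `S`. -/
def IsCompOn (F : Set E) (S : Set V) (K : Set V) : Prop :=
  ∃ v ∈ S, K = {u | u ∈ S ∧ G.ReachOn F S u v}

def IsMatching (M : Set E) : Prop :=
  ∀ e ∈ M, ∀ f ∈ M, e ≠ f → ∀ v : V, ¬ (G.Inc e v ∧ G.Inc f v)

/-- `M` is a perfect matching of the subgraph of `G` induced on `S`. -/
def IsPerfectMatchingOn (S : Set V) (M : Set E) : Prop :=
  (∀ e ∈ M, G.fst e ∈ S ∧ G.snd e ∈ S) ∧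
  ∀ v ∈ S, ∃! e, e ∈ M ∧ G.Inc e v

def IsPerfectMatching (M : Set E) : Prop :=
  G.IsPerfectMatchingOn Set.univ M

/-- Every edge lies in some perfect matching. -/
def MatchingCovered : Prop :=
  ∀ e : E, ∃ M : Set E, G.IsPerfectMatching M ∧ e ∈ M

/-- The subgraph with edge set `F` induced on `K` is factor-critical. -/
def FactorCriticalOn (F : Set E) (K : Set V) : Prop :=
  ∀ v ∈ K, ∃ M : Set E, M ⊆ F ∧ G.IsPerfectMatchingOn (K \ {v}) M

def FactorCritical : Prop := G.FactorCriticalOn Set.univ Set.univ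

/-- `M` is a maximum matching among matchings using only edges in `F`. -/
def IsMaxMatchingIn (F M : Set E) : Prop :=
  M ⊆ F ∧ G.IsMatching M ∧
  ∀ N : Set E, N ⊆ F → G.IsMatching N → N.ncard ≤ M.ncard

/-- Half-edge 2-colourings are functions `c : E → V → Bool`
    (`true` = red, `false` = blue; only the values at endpoints matter). -/
def Bichromatic (c : E → V → Bool) (e : E) : Prop :=
  c e (G.fst e) ≠ c e (G.snd e)

/-- The monochromatic edges. -/
def MonoEdges (c : E → V → Bool) : Set E := {e | ¬ G.Bichromatic c e}

/-- Every vertex has an incident red half-edge. -/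
def VertexCond (c : E → V → Bool) : Prop :=
  ∀ v : V, ∃ e : E, G.Inc e v ∧ c e v = true

/-- Every perfect matching contains exactly one bichromatic edge. -/
def MatchingCond (c : E → V → Bool) : Prop :=
  ∀ M : Set E, G.IsPerfectMatching M → ∃! e, e ∈ M ∧ G.Bichromatic c e

/-- All monochromatic edges are blue. -/
def NoRedMono (c : E → V → Bool) : Prop :=
  ∀ e : E, ¬ G.Bichromatic c e → c e (G.fst e) = false

/-- W-state graph. -/
def IsWState (c : E → V → Bool) : Prop :=
  G.MatchingCovered ∧ G.MatchingCond c ∧ G.VertexCond c ∧ G.NoRedMono c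

def Universal (v : V) : Prop := ∀ u : V, u ≠ v → G.Adj u v

/-- W-cone with apex `v`. -/
def IsWConeWithApex (c : E → V → Bool) (v : V) : Prop :=
  G.MatchingCovered ∧ G.Universal v ∧
  (∀ e : E, G.Bichromatic c e ↔ G.Inc e v) ∧
  G.VertexCond c ∧ G.NoRedMono c

def IsWCone (c : E → V → Bool) : Prop := ∃ v : V, G.IsWConeWithApex c v

/-- `e` and `f` are parallel edges (same pair of endpoints). -/
def Parallel (e f : E) : Prop :=
  (G.fst e = G.fst f ∧ G.snd e = G.snd f) ∨
  (G.fst e = G.snd f ∧ G.snd e = G.fst f)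

/-- The cut `δ(X)`. -/
def CutEdges (X : Set V) : Set E :=
  {e | (G.fst e ∈ X ∧ G.snd e ∉ X) ∨ (G.fst e ∉ X ∧ G.snd e ∈ X)}

/-- `δ(X)` is a tight cut. -/
def IsTightCut (X : Set V) : Prop :=
  ∀ M : Set E, G.IsPerfectMatching M → ∃! e, e ∈ M ∧ e ∈ G.CutEdges X

def Bipartite : Prop :=
  ∃ f : V → Bool, ∀ e : E, f (G.fst e) ≠ f (G.snd e)

/-- A brick: non-bipartite matching-covered graph with no non-trivial tight cut. -/
def IsBrick : Prop :=
  G.MatchingCovered ∧ ¬ G.Bipartite ∧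
  ∀ X : Set V, 2 ≤ X.ncard → 2 ≤ (Set.univ \ X).ncard → ¬ G.IsTightCut X

end Multigraph

namespace Multigraph

variable {V E : Type}

lemma exists_other (G : Multigraph V E) (e : E) (v : V) (h : G.Inc e v) :
    ∃ u, u ≠ v ∧ G.Inc e u ∧ ∀ x, G.Inc e x → x = v ∨ x = u := by
  rcases h with h | h
  · refine ⟨G.snd e, fun heq => G.no_loop e (h.trans heq.symm), Or.inr rfl, ?_⟩
    rintro x (hx | hx)
    · exact Or.inl (hx.symm.trans h)
    · exact Or.inr hx.symm
  · refine ⟨G.fst e, fun heq => G.no_loop e (heq.trans h.symm), Or.inl rfl, ?_⟩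
    rintro x (hx | hx)
    · exact Or.inr hx.symm
    · exact Or.inl (hx.symm.trans h)

lemma adjIn_symm (G : Multigraph V E) {F : Set E} {u v : V} (h : G.AdjIn F u v) :
    G.AdjIn F v u := by
  obtain ⟨hne, e, he, h1, h2⟩ := h
  exact ⟨hne.symm, e, he, h2, h1⟩

lemma reachOn_symm (G : Multigraph V E) {F : Set E} {S : Set V} {u w : V}
    (h : G.ReachOn F S u w) : G.ReachOn F S w u :=
  (@Relation.ReflTransGen.symmetric _ _
    ⟨fun _ _ hab => ⟨hab.2.1, hab.1, G.adjIn_symm hab.2.2⟩⟩).symm _ _ h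

lemma even_ncard_of_pmOn [Fintype V] (G : Multigraph V E) :
    ∀ (n : ℕ) (T : Set V) (M : Set E), T.ncard = n → G.IsPerfectMatchingOn T M → Even n := by
  intro n
  induction n using Nat.strong_induction_on with
  | _ n ih =>
    intro T M hcard hpm
    rcases Set.eq_empty_or_nonempty T with hT | ⟨t, ht⟩
    · subst hT; simp only [Set.ncard_empty] at hcard; exact hcard ▸ Even.zero
    obtain ⟨e, ⟨heM, het⟩, huniq⟩ := hpm.2 t ht
    obtain ⟨s, hst, hes, hall⟩ := G.exists_other e t het
    have hend := hpm.1 e heM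
    have hsT : s ∈ T := by
      rcases hes with hx | hx
      · exact hx ▸ hend.1
      · exact hx ▸ hend.2
    have hkey : ∀ f ∈ M, f ≠ e → ∀ x, G.Inc f x → x ≠ t ∧ x ≠ s := by
      intro f hf hfe x hfx
      constructor
      · intro hx; subst hx
        exact hfe (huniq f ⟨hf, hfx⟩)
      · intro hx; subst hx
        obtain ⟨g, -, hgu⟩ := hpm.2 x hsT
        exact hfe ((hgu f ⟨hf, hfx⟩).trans (hgu e ⟨heM, hes⟩).symm)
    have hpm' : G.IsPerfectMatchingOn (T \ {t, s}) (M \ {e}) := by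
      constructor
      · rintro f ⟨hfM, hfe⟩
        have h1 := hkey f hfM hfe (G.fst f) (Or.inl rfl)
        have h2 := hkey f hfM hfe (G.snd f) (Or.inr rfl)
        have he' := hpm.1 f hfM
        exact ⟨⟨he'.1, by simp [h1.1, h1.2]⟩, ⟨he'.2, by simp [h2.1, h2.2]⟩⟩
      · rintro x ⟨hxT, hxts⟩
        simp only [Set.mem_insert_iff, Set.mem_singleton_iff, not_or] at hxts
        obtain ⟨g, ⟨hgM, hgx⟩, hgu⟩ := hpm.2 x hxT
        have hge : g ≠ e := by
          intro h; subst h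
          rcases hall x hgx with h | h
          · exact hxts.1 h
          · exact hxts.2 h
        refine ⟨g, ⟨⟨hgM, hge⟩, hgx⟩, ?_⟩
        rintro f ⟨⟨hfM, -⟩, hfx⟩
        exact hgu f ⟨hfM, hfx⟩
    have hsub : ({t, s} : Set V) ⊆ T := by
      rintro x (hx | hx)
      · exact hx ▸ ht
      · exact hx ▸ hsT
    have hc2 : ({t, s} : Set V).ncard = 2 := Set.ncard_pair (Ne.symm hst)
    have hn : (T \ {t, s}).ncard + 2 = n := by
      rw [← hcard, ← hc2]
      exact Set.ncard_diff_add_ncard_of_subset hsub (Set.toFinite T)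
    have hlt : (T \ {t, s}).ncard < n := by omega
    obtain ⟨k, hk⟩ := ih _ hlt (T \ {t, s}) (M \ {e}) rfl hpm'
    exact ⟨k + 1, by omega⟩

lemma step1_aux {V E : Type} (G : Multigraph V E) (v : V) {u : V}
    (h : G.ReachOn Set.univ Set.univ u v) (huv : u ≠ v) :
    ∃ w, w ≠ v ∧ G.ReachOn Set.univ (Set.univ \ {v}) u w ∧ G.AdjIn Set.univ w v := by
  unfold Multigraph.ReachOn at h
  induction h using Relation.ReflTransGen.head_induction_on with
  | refl => exact absurd rfl huv
  | head h' _ ih =>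
    rename_i x y _
    by_cases hy : y = v
    · exact ⟨x, huv, Relation.ReflTransGen.refl, hy ▸ h'.2.2⟩
    · obtain ⟨w, hwv, hwreach, hwadj⟩ := ih hy
      exact ⟨w, hwv, Relation.ReflTransGen.head
        ⟨by simp [huv], by simp [hy], h'.2.2⟩ hwreach, hwadj⟩

end Multigraph

/-- A connected matching-covered graph (with at least one edge and a
perfect matching) has no cut vertex; in particular it is 2-connected. -/
theorem stmt1 {V E : Type} [Fintype V] [Fintype E] [Nonempty E] (G : Multigraph V E)
    (hconn : G.Connected) (hmc : G.MatchingCovered)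
    (hpm : ∃ M : Set E, G.IsPerfectMatching M) :
    ∀ v : V, G.ConnectedOn Set.univ (Set.univ \ {v}) := by
  classical
  intro v
  set S : Set V := Set.univ \ {v} with hS
  have hmemS : ∀ x : V, x ∈ S ↔ x ≠ v := by
    intro x; simp [hS]
  obtain ⟨M, hM⟩ := hpm
  obtain ⟨e0, ⟨he0M, he0v⟩, hve0⟩ := hM.2 v trivial
  obtain ⟨u0, hu0v, hu0inc, hu0all⟩ := G.exists_other e0 v he0v
  -- key claim: every vertex ≠ v reaches u0 in G - v
  have key : ∀ u : V, u ≠ v → G.ReachOn Set.univ S u u0 := by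
    intro u huv
    by_contra hru
    set K : Set V := {x | x ∈ S ∧ G.ReachOn Set.univ S x u} with hK
    -- Step 1: find w ∈ K adjacent to v
    have hreach : G.ReachOn Set.univ Set.univ u v := hconn u trivial v trivial
    have step1 : ∃ w, w ≠ v ∧ G.ReachOn Set.univ S u w ∧ G.AdjIn Set.univ w v :=
      G.step1_aux v hreach huv
    obtain ⟨w, hwv, hwreach, hwadj⟩ := step1
    have hwS : w ∈ S := (hmemS w).2 hwv
    have hwK : w ∈ K := ⟨hwS, G.reachOn_symm hwreach⟩
    obtain ⟨-, f, -, hfw, hfv⟩ := hwadj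
    obtain ⟨M', hM', hfM'⟩ := hmc f
    obtain ⟨e0', ⟨he0M', he0v'⟩, hve0'⟩ := hM'.2 v trivial
    have hfe0' : f = e0' := hve0' f ⟨hfM', hfv⟩
    -- endpoints of f are exactly v and w
    obtain ⟨w', hw'v, -, hfall⟩ := G.exists_other f v hfv
    have hww' : w = w' := (hfall w hfw).resolve_left hwv
    subst hww'
    -- K is closed under both matchings (away from the special vertices)
    -- Even |K|
    have evenK : Even K.ncard := by
      apply G.even_ncard_of_pmOn K.ncard K {e ∈ M | G.fst e ∈ K ∧ G.snd e ∈ K} rfl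
      constructor
      · rintro e ⟨-, h1, h2⟩; exact ⟨h1, h2⟩
      · rintro x ⟨hxS, hxu⟩
        obtain ⟨ex, ⟨hexM, hexx⟩, hexu⟩ := hM.2 x trivial
        obtain ⟨y, hyx, hincy, hally⟩ := G.exists_other ex x hexx
        have hyv : y ≠ v := by
          intro h; subst h
          have : ex = e0 := hve0 ex ⟨hexM, hincy⟩
          subst this
          have hxu0 : x = u0 := (hu0all x hexx).resolve_left ((hmemS x).1 hxS)
          exact hru (G.reachOn_symm (hxu0 ▸ hxu))
        have hyK : y ∈ K := by
          refine ⟨(hmemS y).2 hyv, Relation.ReflTransGen.head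
            ⟨(hmemS y).2 hyv, hxS, ⟨hyx, ex, trivial, hincy, hexx⟩⟩ hxu⟩
        have hxK : x ∈ K := ⟨hxS, hxu⟩
        have hends : G.fst ex ∈ K ∧ G.snd ex ∈ K := by
          constructor
          · rcases hally (G.fst ex) (Or.inl rfl) with h | h
            · exact h ▸ hxK
            · exact h ▸ hyK
          · rcases hally (G.snd ex) (Or.inr rfl) with h | h
            · exact h ▸ hxK
            · exact h ▸ hyK
        refine ⟨ex, ⟨⟨hexM, hends⟩, hexx⟩, ?_⟩
        rintro g ⟨⟨hgM, -⟩, hgx⟩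
        exact hexu g ⟨hgM, hgx⟩
    -- Even |K \ {w}|
    have evenK' : Even (K \ {w}).ncard := by
      apply G.even_ncard_of_pmOn _ (K \ {w})
        {e ∈ M' | G.fst e ∈ K \ {w} ∧ G.snd e ∈ K \ {w}} rfl
      constructor
      · rintro e ⟨-, h1, h2⟩; exact ⟨h1, h2⟩
      · rintro x ⟨⟨hxS, hxu⟩, hxw⟩
        simp only [Set.mem_singleton_iff] at hxw
        have hxv : x ≠ v := (hmemS x).1 hxS
        obtain ⟨ex, ⟨hexM, hexx⟩, hexu⟩ := hM'.2 x trivial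
        obtain ⟨y, hyx, hincy, hally⟩ := G.exists_other ex x hexx
        have hexf : ex ≠ f := by
          intro h; subst h
          rcases hfall x hexx with h | h
          · exact hxv h
          · exact hxw h
        have hyv : y ≠ v := by
          intro h; subst h
          exact hexf ((hve0' ex ⟨hexM, hincy⟩).trans hfe0'.symm)
        have hyw : y ≠ w := by
          intro h; subst h
          obtain ⟨g, -, hgu⟩ := hM'.2 y trivial
          exact hexf ((hgu ex ⟨hexM, hincy⟩).trans (hgu f ⟨hfM', hfw⟩).symm)
        have hyK : y ∈ K \ {w} := by
          refine ⟨⟨(hmemS y).2 hyv, Relation.ReflTransGen.head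
            ⟨(hmemS y).2 hyv, hxS, ⟨hyx, ex, trivial, hincy, hexx⟩⟩ hxu⟩, hyw⟩
        have hxK : x ∈ K \ {w} := ⟨⟨hxS, hxu⟩, hxw⟩
        have hends : G.fst ex ∈ K \ {w} ∧ G.snd ex ∈ K \ {w} := by
          constructor
          · rcases hally (G.fst ex) (Or.inl rfl) with h | h
            · exact h ▸ hxK
            · exact h ▸ hyK
          · rcases hally (G.snd ex) (Or.inr rfl) with h | h
            · exact h ▸ hxK
            · exact h ▸ hyK
        refine ⟨ex, ⟨⟨hexM, hends⟩, hexx⟩, ?_⟩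
        rintro g ⟨⟨hgM, -⟩, hgx⟩
        exact hexu g ⟨hgM, hgx⟩
    have hcard : (K \ {w}).ncard + 1 = K.ncard :=
      Set.ncard_diff_singleton_add_one hwK (Set.toFinite K)
    obtain ⟨k1, hk1⟩ := evenK
    obtain ⟨k2, hk2⟩ := evenK'
    omega
  intro a ha b hb
  have hav : a ≠ v := fun h => ha.2 (by simp [h])
  have hbv : b ≠ v := fun h => hb.2 (by simp [h])
  exact (key a hav).trans (G.reachOn_symm (key b hbv))
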